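/- arXiv:2310.17489 — 4 statements merged into one kernel-verified Lean document; each statement's English description precedes it below -/
import Mathlib

section
/- Let f_D be the Gaussian density with mean m and variance σ² on ℝ, let ℓ(x,v) = (x−v)², and for α ≥ 1 define ℓ_α(x,v) = α·ℓ(x,v) if x ≥ v and ℓ(x,v) otherwise. Then for all x ∈ ℝ, I(x) := ∫_ℝ ℓ_α(x,v) f_D(v) dv equals (α−1)·σ²·((w²+1)·Φ(w) + w·φ(w)) + σ²·(w²+1), where w = (x−m)/σ, φ is the standard normal density, and Φ is its cumulative distribution function. -/
open Real MeasureTheory Filter Set Topology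

noncomputable def stdNormalPdf (t : ℝ) : ℝ :=
  (1 / Real.sqrt (2 * π)) * Real.exp (-(t ^ 2) / 2)

noncomputable def stdNormalCdf (t : ℝ) : ℝ := ∫ s in Set.Iic t, stdNormalPdf s

lemma phi_eq (t : ℝ) : stdNormalPdf t = (1 / Real.sqrt (2 * π)) * Real.exp (-(1/2) * t ^ 2) := by
  unfold stdNormalPdf; ring_nf

lemma int_phi : Integrable stdNormalPdf := by
  have h := (integrable_exp_neg_mul_sq (by norm_num : (0:ℝ) < 1/2)).const_mul (1 / Real.sqrt (2 * π))
  exact h.congr (by filter_upwards with t; rw [phi_eq])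

lemma int_mul_phi : Integrable (fun t => t * stdNormalPdf t) := by
  have h := (integrable_mul_exp_neg_mul_sq (by norm_num : (0:ℝ) < 1/2)).const_mul (1 / Real.sqrt (2 * π))
  exact h.congr (by filter_upwards with t; rw [phi_eq]; ring)

lemma int_sq_phi : Integrable (fun t => t ^ 2 * stdNormalPdf t) := by
  have h := (integrable_rpow_mul_exp_neg_mul_sq (by norm_num : (0:ℝ) < 1/2)
      (by norm_num : (-1:ℝ) < 2)).const_mul (1 / Real.sqrt (2 * π))
  refine h.congr (by filter_upwards with t; rw [phi_eq, ← Real.rpow_two]; ring)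

lemma hasDerivAt_phi (t : ℝ) : HasDerivAt stdNormalPdf (-t * stdNormalPdf t) t := by
  have h1 : HasDerivAt (fun s : ℝ => -s ^ 2 / 2) (-t) t := by
    have := (hasDerivAt_pow 2 t).neg.div_const 2
    refine this.congr_deriv ?_
    push_cast; ring
  have h3 := (h1.exp).const_mul (1 / Real.sqrt (2 * π))
  have heq : -t * stdNormalPdf t = 1 / Real.sqrt (2 * π) * (Real.exp (-t ^ 2 / 2) * -t) := by
    unfold stdNormalPdf; ring
  rw [heq]
  exact h3

lemma sq_atTop : Tendsto (fun t : ℝ => t ^ 2) atTop atTop :=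
  tendsto_pow_atTop (by norm_num)

lemma sq_atBot : Tendsto (fun t : ℝ => t ^ 2) atBot atTop := by
  have := sq_atTop.comp tendsto_neg_atBot_atTop
  simpa [Function.comp_def] using this

lemma phi_tendsto_atTop : Tendsto stdNormalPdf atTop (𝓝 0) := by
  have h : Tendsto (fun t : ℝ => Real.exp (-(t ^ 2 / 2))) atTop (𝓝 0) :=
    tendsto_exp_neg_atTop_nhds_zero.comp (sq_atTop.atTop_div_const (by norm_num))
  have := h.const_mul (1 / Real.sqrt (2 * π))
  rw [mul_zero] at this
  exact this.congr fun t => by unfold stdNormalPdf; rw [neg_div]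

lemma phi_tendsto_atBot : Tendsto stdNormalPdf atBot (𝓝 0) := by
  have h : Tendsto (fun t : ℝ => Real.exp (-(t ^ 2 / 2))) atBot (𝓝 0) :=
    tendsto_exp_neg_atTop_nhds_zero.comp (sq_atBot.atTop_div_const (by norm_num))
  have := h.const_mul (1 / Real.sqrt (2 * π))
  rw [mul_zero] at this
  exact this.congr fun t => by unfold stdNormalPdf; rw [neg_div]

lemma mul_phi_tendsto_atTop : Tendsto (fun t => t * stdNormalPdf t) atTop (𝓝 0) := by
  have h : Tendsto (fun u : ℝ => u ^ ((1:ℝ)/2) * Real.exp (-(1/2) * u)) atTop (𝓝 0) :=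
    tendsto_rpow_mul_exp_neg_mul_atTop_nhds_zero _ _ (by norm_num)
  have h2 : Tendsto (fun t : ℝ => (t ^ 2) ^ ((1:ℝ)/2) * Real.exp (-(1/2) * t ^ 2)) atTop (𝓝 0) :=
    h.comp sq_atTop
  have h3 : Tendsto (fun t : ℝ => t * Real.exp (-(1/2) * t ^ 2)) atTop (𝓝 0) := by
    apply h2.congr'
    filter_upwards [eventually_ge_atTop (0:ℝ)] with t ht
    rw [← Real.rpow_natCast t 2, ← Real.rpow_mul ht]
    norm_num
  have := h3.const_mul (1 / Real.sqrt (2 * π))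
  simpa only [mul_zero] using this.congr (fun t => by rw [phi_eq]; ring)

lemma mul_phi_tendsto_atBot : Tendsto (fun t => t * stdNormalPdf t) atBot (𝓝 0) := by
  have h := (mul_phi_tendsto_atTop.comp tendsto_neg_atBot_atTop).neg
  simp only [Function.comp, neg_zero] at h
  apply h.congr
  intro t
  have : stdNormalPdf (-t) = stdNormalPdf t := by unfold stdNormalPdf; ring_nf
  rw [this]; ring

lemma hasDerivAt_neg_phi (t : ℝ) : HasDerivAt (fun s => -stdNormalPdf s) (t * stdNormalPdf t) t := by
  have := (hasDerivAt_phi t).neg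
  refine this.congr_deriv ?_; ring

lemma hasDerivAt_neg_mul_phi (t : ℝ) :
    HasDerivAt (fun s => -(s * stdNormalPdf s)) ((t ^ 2 - 1) * stdNormalPdf t) t := by
  have := ((hasDerivAt_id t).mul (hasDerivAt_phi t)).neg
  refine this.congr_deriv ?_; simp only [id_eq]; ring

lemma int_sq_sub_phi : Integrable (fun t => (t ^ 2 - 1) * stdNormalPdf t) := by
  have h : (fun t : ℝ => (t ^ 2 - 1) * stdNormalPdf t)
      = fun t => t ^ 2 * stdNormalPdf t - stdNormalPdf t := by funext t; ring
  rw [h]; exact int_sq_phi.sub int_phi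

lemma integral_phi : ∫ t, stdNormalPdf t = 1 := by
  have h : ∫ t : ℝ, Real.exp (-(1/2) * t ^ 2) = Real.sqrt (π / (1/2)) :=
    integral_gaussian (1/2)
  have : (∫ t, stdNormalPdf t) = (1 / Real.sqrt (2 * π)) * ∫ t : ℝ, Real.exp (-(1/2) * t ^ 2) := by
    rw [← integral_const_mul]
    exact integral_congr_ae (by filter_upwards with t; rw [phi_eq])
  rw [this, h]
  have h2 : π / (1/2) = 2 * π := by ring
  rw [h2]
  have : Real.sqrt (2 * π) ≠ 0 := by positivity
  field_simp

lemma integral_mul_phi : ∫ t, t * stdNormalPdf t = 0 := by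
  have := integral_of_hasDerivAt_of_tendsto (f := fun s => -stdNormalPdf s)
    (fun t => hasDerivAt_neg_phi t) int_mul_phi (phi_tendsto_atBot.neg) (phi_tendsto_atTop.neg)
  simpa using this

lemma integral_sq_sub_phi : ∫ t, (t ^ 2 - 1) * stdNormalPdf t = 0 := by
  have := integral_of_hasDerivAt_of_tendsto (f := fun s => -(s * stdNormalPdf s))
    (fun t => hasDerivAt_neg_mul_phi t) int_sq_sub_phi
    (mul_phi_tendsto_atBot.neg) (mul_phi_tendsto_atTop.neg)
  simpa using this

lemma integral_sq_phi : ∫ t, t ^ 2 * stdNormalPdf t = 1 := by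
  have h : (∫ t, (t ^ 2 - 1) * stdNormalPdf t)
      = (∫ t, t ^ 2 * stdNormalPdf t) - ∫ t, stdNormalPdf t := by
    rw [← integral_sub int_sq_phi int_phi]
    exact integral_congr_ae (by filter_upwards with t; ring)
  rw [integral_sq_sub_phi, integral_phi] at h
  linarith

lemma integral_Iic_mul_phi (w : ℝ) : ∫ t in Iic w, t * stdNormalPdf t = -stdNormalPdf w := by
  have := integral_Iic_of_hasDerivAt_of_tendsto' (a := w) (f := fun s => -stdNormalPdf s)
    (fun t _ => hasDerivAt_neg_phi t) int_mul_phi.integrableOn (phi_tendsto_atBot.neg)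
  simpa using this

lemma integral_Iic_sq_sub_phi (w : ℝ) :
    ∫ t in Iic w, (t ^ 2 - 1) * stdNormalPdf t = -(w * stdNormalPdf w) := by
  have := integral_Iic_of_hasDerivAt_of_tendsto' (a := w) (f := fun s => -(s * stdNormalPdf s))
    (fun t _ => hasDerivAt_neg_mul_phi t) int_sq_sub_phi.integrableOn (mul_phi_tendsto_atBot.neg)
  simpa using this

lemma integral_Iic_sq_phi (w : ℝ) :
    ∫ t in Iic w, t ^ 2 * stdNormalPdf t = stdNormalCdf w - w * stdNormalPdf w := by
  have h : (∫ t in Iic w, (t ^ 2 - 1) * stdNormalPdf t)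
      = (∫ t in Iic w, t ^ 2 * stdNormalPdf t) - ∫ t in Iic w, stdNormalPdf t := by
    rw [← integral_sub int_sq_phi.integrableOn int_phi.integrableOn]
    exact integral_congr_ae (by filter_upwards with t; ring)
  rw [integral_Iic_sq_sub_phi] at h
  have : stdNormalCdf w = ∫ t in Iic w, stdNormalPdf t := rfl
  rw [this]
  linarith

lemma quad_expand (w : ℝ) : (fun t : ℝ => (w - t) ^ 2 * stdNormalPdf t)
    = fun t => (w ^ 2 * stdNormalPdf t - (2 * w) * (t * stdNormalPdf t)) + t ^ 2 * stdNormalPdf t := by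
  funext t; ring

lemma int_quad (w : ℝ) : Integrable (fun t => (w - t) ^ 2 * stdNormalPdf t) := by
  rw [quad_expand]
  exact ((int_phi.const_mul _).sub (int_mul_phi.const_mul _)).add int_sq_phi

lemma intA (w : ℝ) :
    Integrable (fun t : ℝ => w ^ 2 * stdNormalPdf t - 2 * w * (t * stdNormalPdf t)) :=
  (int_phi.const_mul (w ^ 2)).sub (int_mul_phi.const_mul (2 * w))

lemma integral_quad (w : ℝ) : ∫ t, (w - t) ^ 2 * stdNormalPdf t = w ^ 2 + 1 := by
  rw [quad_expand,
    integral_add (intA w) int_sq_phi,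
    integral_sub (int_phi.const_mul _) (int_mul_phi.const_mul _),
    integral_const_mul, integral_const_mul, integral_phi, integral_mul_phi, integral_sq_phi]
  ring

lemma integral_Iic_quad (w : ℝ) : ∫ t in Iic w, (w - t) ^ 2 * stdNormalPdf t
    = (w ^ 2 + 1) * stdNormalCdf w + w * stdNormalPdf w := by
  rw [quad_expand,
    integral_add (intA w).integrableOn int_sq_phi.integrableOn,
    integral_sub (int_phi.const_mul _).integrableOn (int_mul_phi.const_mul _).integrableOn,
    integral_const_mul, integral_const_mul, integral_Iic_mul_phi, integral_Iic_sq_phi]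
  have : (∫ t in Iic w, stdNormalPdf t) = stdNormalCdf w := rfl
  rw [this]; ring

theorem stmt0 (m σ : ℝ) (hσ : 0 < σ) (α : ℝ) (hα : 1 ≤ α)
    (fD : ℝ → ℝ)
    (hfD : ∀ v, fD v = (1 / Real.sqrt (2 * π * σ ^ 2)) * Real.exp (-(v - m) ^ 2 / (2 * σ ^ 2)))
    (ℓα : ℝ → ℝ → ℝ)
    (hℓ : ∀ x v, ℓα x v = if v ≤ x then α * (x - v) ^ 2 else (x - v) ^ 2)
    (x : ℝ) :
    (∫ v, ℓα x v * fD v) =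
      (α - 1) * σ ^ 2 *
          ((((x - m) / σ) ^ 2 + 1) * stdNormalCdf ((x - m) / σ)
            + ((x - m) / σ) * stdNormalPdf ((x - m) / σ))
        + σ ^ 2 * (((x - m) / σ) ^ 2 + 1) := by
  have hσ0 : σ ≠ 0 := ne_of_gt hσ
  set w := (x - m) / σ with hw
  have hsub : ∀ G : ℝ → ℝ, ∫ v, G v = σ * ∫ t, G (σ * t + m) := by
    intro G
    have h1 : (∫ t, G (σ * t + m)) = |σ⁻¹| • ∫ u, G (u + m) :=
      MeasureTheory.Measure.integral_comp_mul_left (fun u => G (u + m)) σ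
    rw [integral_add_right_eq_self (fun u => G u) m] at h1
    rw [h1, abs_of_pos (inv_pos.mpr hσ), smul_eq_mul]
    field_simp
  have hpoint : ∀ t, ℓα x (σ * t + m) * fD (σ * t + m)
      = σ * ((w - t) ^ 2 * stdNormalPdf t
          + (α - 1) * Set.indicator (Iic w) (fun s => (w - s) ^ 2 * stdNormalPdf s) t) := by
    intro t
    rw [hℓ, hfD]
    have hcond : (σ * t + m ≤ x) ↔ t ≤ w := by
      rw [hw, le_div_iff₀ hσ]
      constructor <;> intro h <;> nlinarith
    have hfval : (1 / Real.sqrt (2 * π * σ ^ 2)) * Real.exp (-(σ * t + m - m) ^ 2 / (2 * σ ^ 2))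
        = stdNormalPdf t / σ := by
      have hs : Real.sqrt (2 * π * σ ^ 2) = Real.sqrt (2 * π) * σ := by
        rw [Real.sqrt_mul (by positivity), Real.sqrt_sq hσ.le]
      have he : -(σ * t + m - m) ^ 2 / (2 * σ ^ 2) = -(t ^ 2) / 2 := by
        field_simp; ring
      rw [hs, he]
      unfold stdNormalPdf
      field_simp
    have hx : x - (σ * t + m) = σ * (w - t) := by
      rw [hw]; field_simp; ring
    rw [hfval, hx]
    by_cases h : t ≤ w
    · rw [if_pos (hcond.mpr h), Set.indicator_of_mem (Set.mem_Iic.mpr h)]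
      field_simp; ring
    · rw [if_neg (fun hc => h (hcond.mp hc)),
        Set.indicator_of_notMem (fun hc => h (Set.mem_Iic.mp hc))]
      field_simp; ring
  rw [hsub (fun v => ℓα x v * fD v)]
  have h2 : (∫ t, ℓα x (σ * t + m) * fD (σ * t + m))
      = σ * ∫ t, ((w - t) ^ 2 * stdNormalPdf t
          + (α - 1) * Set.indicator (Iic w) (fun s => (w - s) ^ 2 * stdNormalPdf s) t) := by
    rw [← integral_const_mul]
    exact integral_congr_ae (Filter.Eventually.of_forall hpoint)
  rw [h2]
  have hind : Integrable (Set.indicator (Iic w) (fun s => (w - s) ^ 2 * stdNormalPdf s)) :=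
    (int_quad w).integrableOn.integrable_indicator measurableSet_Iic
  rw [integral_add (int_quad w) (hind.const_mul _), integral_const_mul,
    integral_indicator measurableSet_Iic, integral_quad, integral_Iic_quad]
  ring
end

section
/- Let f_D be the Laplace density f_D(v) = (1/(2b))·e^{−|v−a|/b} on ℝ with a ∈ ℝ, b > 0, let ℓ(x,v) = |x−a| − |v−a|, and for α ≥ 1 define ℓ_α(x,v) = α·ℓ(x,v) if x ≥ v and ℓ(x,v) otherwise. Then I(x) := ∫_ℝ ℓ_α(x,v) f_D(v) dv equals α·b·(w−1) + b·((α−1)/2)·e^{−w} when x ≥ a, and −b·(w+1) + b·((1−α)/2)·e^{w} when x < a, where w = (x−a)/b. -/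
open Real MeasureTheory Filter Set

lemma my_tendsto_linexp (A B : ℝ) :
    Tendsto (fun t : ℝ => (A + B * t) * Real.exp (-t)) atTop (nhds 0) := by
  have h1 : Tendsto (fun t : ℝ => A * Real.exp (-t)) atTop (nhds 0) := by
    simpa using Real.tendsto_exp_neg_atTop_nhds_zero.const_mul A
  have h2 : Tendsto (fun t : ℝ => B * (t * Real.exp (-t))) atTop (nhds 0) := by
    have := (Real.tendsto_pow_mul_exp_neg_atTop_nhds_zero 1).const_mul B
    simpa using this
  have h := h1.add h2
  rw [add_zero] at h
  exact h.congr fun t => by ring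

lemma my_intOn_Ioi (c : ℝ) (hc : 0 < c) (p q r : ℝ) :
    IntegrableOn (fun v => (p + q * v) * Real.exp (-(c * v))) (Ioi r) := by
  have hcontf : Continuous fun v : ℝ => (p + q * v) * Real.exp (-(c * v)) :=
    (continuous_const.add (continuous_const.mul continuous_id)).mul
      (Real.continuous_exp.comp (continuous_const.mul continuous_id).neg)
  have h1 : IntegrableOn (fun v => (p + q * v) * Real.exp (-(c * v))) (Ioc r (max r 0)) :=
    hcontf.integrableOn_Ioc
  have h2 : IntegrableOn (fun v => (p + q * v) * Real.exp (-(c * v))) (Ioi (max r 0)) := by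
    have hint : Integrable (fun v => (|p| + |q| * (2 / c)) * Real.exp (-(c / 2 * v)))
        (volume.restrict (Ioi (max r 0))) := by
      have h0 : IntegrableOn (fun v : ℝ => Real.exp (-(c / 2) * v)) (Ioi (max r 0)) :=
        exp_neg_integrableOn_Ioi _ (by positivity)
      have h0' := h0.const_mul (|p| + |q| * (2 / c))
      simpa [neg_mul] using h0'
    refine hint.mono (hcontf.aestronglyMeasurable.restrict) ?_
    filter_upwards [ae_restrict_mem measurableSet_Ioi] with v hv
    have hv0 : (0 : ℝ) ≤ v := le_trans (le_max_right r 0) hv.le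
    have hkey : c / 2 * v ≤ Real.exp (c / 2 * v) := by
      have := Real.add_one_le_exp (c / 2 * v); linarith
    have hE := Real.exp_pos (c / 2 * v)
    have h4 : v * Real.exp (-(c / 2 * v)) ≤ 2 / c := by
      have hv2 : v ≤ 2 / c * Real.exp (c / 2 * v) := by
        rw [div_mul_eq_mul_div, le_div_iff₀ hc]; nlinarith
      calc v * Real.exp (-(c / 2 * v))
          ≤ (2 / c * Real.exp (c / 2 * v)) * Real.exp (-(c / 2 * v)) :=
            mul_le_mul_of_nonneg_right hv2 (Real.exp_pos _).le
        _ = 2 / c := by rw [mul_assoc, ← Real.exp_add]; simp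
    have hPQ : (0 : ℝ) ≤ |p| + |q| * (2 / c) :=
      add_nonneg (abs_nonneg p) (mul_nonneg (abs_nonneg q) (div_nonneg (by norm_num) hc.le))
    rw [Real.norm_eq_abs, Real.norm_eq_abs, abs_mul, abs_mul, abs_of_pos (Real.exp_pos _),
      abs_of_pos (Real.exp_pos _), abs_of_nonneg hPQ]
    have hsplit : Real.exp (-(c * v)) = Real.exp (-(c / 2 * v)) * Real.exp (-(c / 2 * v)) := by
      rw [← Real.exp_add]; ring_nf
    have h3 : |p + q * v| ≤ |p| + |q| * v := by
      calc |p + q * v| ≤ |p| + |q * v| := abs_add_le _ _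
        _ = |p| + |q| * v := by rw [abs_mul, abs_of_nonneg hv0]
    calc |p + q * v| * Real.exp (-(c * v))
        ≤ (|p| + |q| * v) * Real.exp (-(c * v)) :=
          mul_le_mul_of_nonneg_right h3 (Real.exp_pos _).le
      _ = |p| * Real.exp (-(c * v)) + |q| * (v * Real.exp (-(c * v))) := by ring
      _ ≤ |p| * Real.exp (-(c / 2 * v)) + |q| * (2 / c * Real.exp (-(c / 2 * v))) := by
          refine add_le_add ?_ ?_
          · exact mul_le_mul_of_nonneg_left (Real.exp_le_exp.mpr (by nlinarith)) (abs_nonneg p)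
          · refine mul_le_mul_of_nonneg_left ?_ (abs_nonneg q)
            rw [hsplit, ← mul_assoc]
            exact mul_le_mul_of_nonneg_right h4 (Real.exp_pos _).le
      _ = (|p| + |q| * (2 / c)) * Real.exp (-(c / 2 * v)) := by ring
  have h := h1.union h2
  rwa [Ioc_union_Ioi_eq_Ioi (le_max_left r 0)] at h

lemma my_intOn_Iic (c : ℝ) (hc : 0 < c) (p q r : ℝ) :
    IntegrableOn (fun v => (p + q * v) * Real.exp (c * v)) (Iic r) := by
  rw [← (Measure.measurePreserving_neg (volume : Measure ℝ)).integrableOn_comp_preimage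
      (Homeomorph.neg ℝ).measurableEmbedding]
  simp only [Function.comp_def, neg_preimage, neg_Iic]
  rw [integrableOn_Ici_iff_integrableOn_Ioi]
  have h2 : (fun v : ℝ => (p + q * -v) * Real.exp (c * -v))
      = fun v => (p + -q * v) * Real.exp (-(c * v)) := by
    funext v; ring_nf
  rw [h2]
  exact my_intOn_Ioi c hc p (-q) (-r)

lemma my_hderiv_pos (a b : ℝ) (hb : 0 < b) (p q : ℝ) (v : ℝ) :
    HasDerivAt (fun v => (b * (p - q * b) + b * q * v) * Real.exp ((v - a) / b))
      ((p + q * v) * Real.exp ((v - a) / b)) v := by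
  have h1 : HasDerivAt (fun v : ℝ => (v - a) / b) (1 / b) v := by
    simpa using ((hasDerivAt_id v).sub_const a).div_const b
  have h3 : HasDerivAt (fun v : ℝ => b * (p - q * b) + b * q * v) (b * q) v := by
    simpa using ((hasDerivAt_id v).const_mul (b * q)).const_add (b * (p - q * b))
  have h4 := h3.fun_mul h1.exp
  refine h4.congr_deriv ?_
  field_simp
  ring

lemma my_hderiv_neg (a b : ℝ) (hb : 0 < b) (p q : ℝ) (v : ℝ) :
    HasDerivAt (fun v => -(b * (p + q * b) + b * q * v) * Real.exp (-((v - a) / b)))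
      ((p + q * v) * Real.exp (-((v - a) / b))) v := by
  have h1 : HasDerivAt (fun v : ℝ => -((v - a) / b)) (-(1 / b)) v := by
    simpa using (((hasDerivAt_id v).sub_const a).div_const b).fun_neg
  have h3 : HasDerivAt (fun v : ℝ => -(b * (p + q * b) + b * q * v)) (-(b * q)) v := by
    simpa using (((hasDerivAt_id v).const_mul (b * q)).const_add (b * (p + q * b))).fun_neg
  have h4 := h3.fun_mul h1.exp
  refine h4.congr_deriv ?_
  field_simp
  ring

lemma my_intOn_pos' (a b : ℝ) (hb : 0 < b) (p q r : ℝ) :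
    IntegrableOn (fun v => (p + q * v) * Real.exp ((v - a) / b)) (Iic r) := by
  have h := my_intOn_Iic (1 / b) (by positivity) (p * Real.exp (-(a / b)))
    (q * Real.exp (-(a / b))) r
  refine h.congr_fun (fun v _ => ?_) measurableSet_Iic
  rw [show (v - a) / b = 1 / b * v + -(a / b) by ring, Real.exp_add]
  ring

lemma my_intOn_neg' (a b : ℝ) (hb : 0 < b) (p q r : ℝ) :
    IntegrableOn (fun v => (p + q * v) * Real.exp (-((v - a) / b))) (Ioi r) := by
  have h := my_intOn_Ioi (1 / b) (by positivity) (p * Real.exp (a / b))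
    (q * Real.exp (a / b)) r
  refine h.congr_fun (fun v _ => ?_) measurableSet_Ioi
  rw [show -((v - a) / b) = -(1 / b * v) + a / b by ring, Real.exp_add]
  ring

lemma my_val_Iic (a b : ℝ) (hb : 0 < b) (p q r : ℝ) :
    ∫ v in Iic r, (p + q * v) * Real.exp ((v - a) / b)
      = (b * (p - q * b) + b * q * r) * Real.exp ((r - a) / b) := by
  have hcomp : Tendsto (fun v : ℝ => -((v - a) / b)) atBot atTop := by
    refine tendsto_neg_atBot_atTop.comp ?_
    refine (tendsto_div_const_atBot_of_pos hb).mpr ?_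
    simpa [sub_eq_add_neg] using tendsto_atBot_add_const_right atBot (-a) (tendsto_id (α := ℝ))
  have htend : Tendsto (fun v => (b * (p - q * b) + b * q * v) * Real.exp ((v - a) / b))
      atBot (nhds 0) := by
    have h0 := (my_tendsto_linexp (b * (p - q * b) + b * q * a) (-(b * b * q))).comp hcomp
    refine h0.congr fun v => ?_
    simp only [Function.comp]
    rw [neg_neg]
    congr 1
    field_simp
    ring
  have h := integral_Iic_of_hasDerivAt_of_tendsto' (a := r)
    (fun v _ => my_hderiv_pos a b hb p q v) (my_intOn_pos' a b hb p q r) htend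
  rw [h, sub_zero]

lemma my_val_Ioi (a b : ℝ) (hb : 0 < b) (p q r : ℝ) :
    ∫ v in Ioi r, (p + q * v) * Real.exp (-((v - a) / b))
      = (b * (p + q * b) + b * q * r) * Real.exp (-((r - a) / b)) := by
  have hcomp : Tendsto (fun v : ℝ => (v - a) / b) atTop atTop := by
    refine (tendsto_div_const_atTop_of_pos hb).mpr ?_
    simpa [sub_eq_add_neg] using tendsto_atTop_add_const_right atTop (-a) (tendsto_id (α := ℝ))
  have htend : Tendsto (fun v => -(b * (p + q * b) + b * q * v) * Real.exp (-((v - a) / b)))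
      atTop (nhds 0) := by
    have h0 := (my_tendsto_linexp (-(b * (p + q * b) + b * q * a)) (-(b * b * q))).comp hcomp
    refine h0.congr fun v => ?_
    simp only [Function.comp]
    congr 1
    field_simp
    ring
  have h := integral_Ioi_of_hasDerivAt_of_tendsto' (a := r)
    (fun v _ => my_hderiv_neg a b hb p q v) (my_intOn_neg' a b hb p q r) htend
  rw [h, zero_sub, neg_mul, neg_neg]

lemma my_val_ivl_pos (a b : ℝ) (hb : 0 < b) (p q r s : ℝ) :
    ∫ v in r..s, (p + q * v) * Real.exp ((v - a) / b)
      = (b * (p - q * b) + b * q * s) * Real.exp ((s - a) / b)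
        - (b * (p - q * b) + b * q * r) * Real.exp ((r - a) / b) := by
  refine intervalIntegral.integral_eq_sub_of_hasDerivAt
    (fun v _ => my_hderiv_pos a b hb p q v) ?_
  apply Continuous.intervalIntegrable
  exact (continuous_const.add (continuous_const.mul continuous_id)).mul
    (Real.continuous_exp.comp ((continuous_id.sub continuous_const).div_const b))

lemma my_val_ivl_neg (a b : ℝ) (hb : 0 < b) (p q r s : ℝ) :
    ∫ v in r..s, (p + q * v) * Real.exp (-((v - a) / b))
      = -(b * (p + q * b) + b * q * s) * Real.exp (-((s - a) / b))
        - -(b * (p + q * b) + b * q * r) * Real.exp (-((r - a) / b)) := by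
  refine intervalIntegral.integral_eq_sub_of_hasDerivAt
    (fun v _ => my_hderiv_neg a b hb p q v) ?_
  apply Continuous.intervalIntegrable
  exact (continuous_const.add (continuous_const.mul continuous_id)).mul
    (Real.continuous_exp.comp ((continuous_id.sub continuous_const).div_const b).neg)

theorem stmt5 (a b : ℝ) (hb : 0 < b) (α : ℝ) (hα : 1 ≤ α)
    (fD : ℝ → ℝ) (hfD : ∀ v, fD v = (1 / (2 * b)) * Real.exp (-|v - a| / b))
    (ℓα : ℝ → ℝ → ℝ)
    (hℓ : ∀ x v, ℓα x v = if v ≤ x then α * (|x - a| - |v - a|) else |x - a| - |v - a|)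
    (x : ℝ) :
    (∫ v, ℓα x v * fD v) =
      if a ≤ x then
        α * b * ((x - a) / b - 1) + b * ((α - 1) / 2) * Real.exp (-((x - a) / b))
      else
        -b * ((x - a) / b + 1) + b * ((1 - α) / 2) * Real.exp ((x - a) / b) := by
  have hb' : b ≠ 0 := hb.ne'
  by_cases hax : a ≤ x
  · rw [if_pos hax]
    have eq1 : EqOn (fun v => ℓα x v * fD v)
        (fun v => (α * (x - 2 * a) / (2 * b) + α / (2 * b) * v) * Real.exp ((v - a) / b))
        (Iic a) := by
      intro v hv
      simp only
      rw [hℓ, hfD, if_pos (le_trans (mem_Iic.mp hv) hax),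
        abs_of_nonneg (by linarith : (0:ℝ) ≤ x - a),
        abs_of_nonpos (by simp only [mem_Iic] at hv; linarith : v - a ≤ 0)]
      rw [show -(-(v - a)) / b = (v - a) / b by ring]
      ring
    have eq2 : EqOn (fun v => ℓα x v * fD v)
        (fun v => (α * x / (2 * b) + -α / (2 * b) * v) * Real.exp (-((v - a) / b)))
        (Ioc a x) := by
      intro v hv
      simp only
      rw [hℓ, hfD, if_pos hv.2,
        abs_of_nonneg (by linarith : (0:ℝ) ≤ x - a),
        abs_of_nonneg (by linarith [hv.1] : (0:ℝ) ≤ v - a)]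
      rw [show -(v - a) / b = -((v - a) / b) by ring]
      ring
    have eq3 : EqOn (fun v => ℓα x v * fD v)
        (fun v => (x / (2 * b) + -1 / (2 * b) * v) * Real.exp (-((v - a) / b)))
        (Ioi x) := by
      intro v hv
      simp only [mem_Ioi] at hv
      simp only
      rw [hℓ, hfD, if_neg (not_le.mpr hv),
        abs_of_nonneg (by linarith : (0:ℝ) ≤ x - a),
        abs_of_nonneg (by linarith : (0:ℝ) ≤ v - a)]
      rw [show -(v - a) / b = -((v - a) / b) by ring]
      ring
    have hga : IntegrableOn (fun v => ℓα x v * fD v) (Iic a) :=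
      (my_intOn_pos' a b hb _ _ a).congr_fun eq1.symm measurableSet_Iic
    have hgax : IntegrableOn (fun v => ℓα x v * fD v) (Ioc a x) := by
      refine (Continuous.integrableOn_Ioc ?_).congr_fun eq2.symm measurableSet_Ioc
      exact (continuous_const.add (continuous_const.mul continuous_id)).mul
        (Real.continuous_exp.comp ((continuous_id.sub continuous_const).div_const b).neg)
    have hgx : IntegrableOn (fun v => ℓα x v * fD v) (Ioi x) :=
      (my_intOn_neg' a b hb _ _ x).congr_fun eq3.symm measurableSet_Ioi
    have hgIic : IntegrableOn (fun v => ℓα x v * fD v) (Iic x) := by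
      have h := hga.union hgax
      rwa [Iic_union_Ioc_eq_Iic hax] at h
    rw [← intervalIntegral.integral_Iic_add_Ioi hgIic hgx, ← Iic_union_Ioc_eq_Iic hax,
      setIntegral_union ((Iic_disjoint_Ioi le_rfl).mono_right Ioc_subset_Ioi_self)
        measurableSet_Ioc hga hgax,
      setIntegral_congr_fun measurableSet_Iic eq1,
      setIntegral_congr_fun measurableSet_Ioc eq2,
      setIntegral_congr_fun measurableSet_Ioi eq3,
      my_val_Iic a b hb _ _ a, ← intervalIntegral.integral_of_le hax,
      my_val_ivl_neg a b hb _ _ a x, my_val_Ioi a b hb _ _ x]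
    simp only [sub_self, zero_div, neg_zero, Real.exp_zero]
    field_simp
    ring
  · rw [if_neg hax]
    have hxa : x < a := lt_of_not_ge hax
    have eq1 : EqOn (fun v => ℓα x v * fD v)
        (fun v => (-(α * x) / (2 * b) + α / (2 * b) * v) * Real.exp ((v - a) / b))
        (Iic x) := by
      intro v hv
      simp only [mem_Iic] at hv
      simp only
      rw [hℓ, hfD, if_pos hv,
        abs_of_nonpos (by linarith : x - a ≤ 0),
        abs_of_nonpos (by linarith : v - a ≤ 0)]
      rw [show -(-(v - a)) / b = (v - a) / b by ring]
      ring
    have eq2 : EqOn (fun v => ℓα x v * fD v)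
        (fun v => (-x / (2 * b) + 1 / (2 * b) * v) * Real.exp ((v - a) / b))
        (Ioc x a) := by
      intro v hv
      simp only
      rw [hℓ, hfD, if_neg (not_le.mpr hv.1),
        abs_of_nonpos (by linarith : x - a ≤ 0),
        abs_of_nonpos (by linarith [hv.2] : v - a ≤ 0)]
      rw [show -(-(v - a)) / b = (v - a) / b by ring]
      ring
    have eq3 : EqOn (fun v => ℓα x v * fD v)
        (fun v => ((2 * a - x) / (2 * b) + -1 / (2 * b) * v) * Real.exp (-((v - a) / b)))
        (Ioi a) := by
      intro v hv
      simp only [mem_Ioi] at hv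
      simp only
      rw [hℓ, hfD, if_neg (not_le.mpr (by linarith : x < v)),
        abs_of_nonpos (by linarith : x - a ≤ 0),
        abs_of_nonneg (by linarith : (0:ℝ) ≤ v - a)]
      rw [show -(v - a) / b = -((v - a) / b) by ring]
      ring
    have hgx : IntegrableOn (fun v => ℓα x v * fD v) (Iic x) :=
      (my_intOn_pos' a b hb _ _ x).congr_fun eq1.symm measurableSet_Iic
    have hgxa : IntegrableOn (fun v => ℓα x v * fD v) (Ioc x a) := by
      refine (Continuous.integrableOn_Ioc ?_).congr_fun eq2.symm measurableSet_Ioc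
      exact (continuous_const.add (continuous_const.mul continuous_id)).mul
        (Real.continuous_exp.comp ((continuous_id.sub continuous_const).div_const b))
    have hga : IntegrableOn (fun v => ℓα x v * fD v) (Ioi a) :=
      (my_intOn_neg' a b hb _ _ a).congr_fun eq3.symm measurableSet_Ioi
    have hgIoi : IntegrableOn (fun v => ℓα x v * fD v) (Ioi x) := by
      have h := hgxa.union hga
      rwa [Ioc_union_Ioi_eq_Ioi hxa.le] at h
    rw [← intervalIntegral.integral_Iic_add_Ioi hgx hgIoi, ← Ioc_union_Ioi_eq_Ioi hxa.le,
      setIntegral_union ((Iic_disjoint_Ioi le_rfl).mono_left Ioc_subset_Iic_self)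
        measurableSet_Ioi hgxa hga,
      setIntegral_congr_fun measurableSet_Iic eq1,
      setIntegral_congr_fun measurableSet_Ioc eq2,
      setIntegral_congr_fun measurableSet_Ioi eq3,
      my_val_Iic a b hb _ _ x, ← intervalIntegral.integral_of_le hxa.le,
      my_val_ivl_pos a b hb _ _ x a, my_val_Ioi a b hb _ _ a]
    simp only [sub_self, zero_div, neg_zero, Real.exp_zero]
    field_simp
    ring
end

section
/- Let f_D be a probability density on an interval Ω ⊆ ℝ and suppose the loss ℓ(x,v) is, for each fixed v, a strictly increasing function of x on all of Ω with ℓ(x,x) = 0 (a 'TypeN' loss, e.g. ℓ(x,v) = ln x − ln v or x − v). Then I^R(x) := ∫_{Ω ∩ [x,∞)} ℓ(x,v) f_D(v) dv is an increasing function of x, and I^R(x₁) < I^R(x₂) whenever x₁ < x₂ and f_D assigns positive mass to (x₁, x₂) or to [x₂,∞). -/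
open Real MeasureTheory

lemma neg_int_aux (s : Set ℝ) (hs : MeasurableSet s) (φ fD : ℝ → ℝ)
    (hφ : ∀ v ∈ s, φ v < 0) (hfD : ∀ v, 0 ≤ fD v)
    (hint : IntegrableOn (fun v => φ v * fD v) s)
    (hpos : 0 < ∫ v in s, fD v) : ∫ v in s, φ v * fD v < 0 := by
  have hnonneg : 0 ≤ᵐ[volume.restrict s] fun v => -(φ v * fD v) := by
    filter_upwards [ae_restrict_mem hs] with v hv
    have := mul_nonpos_of_nonpos_of_nonneg (le_of_lt (hφ v hv)) (hfD v)
    simpa using this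
  have hint' : Integrable (fun v => -(φ v * fD v)) (volume.restrict s) := hint.neg
  have h0 : 0 ≤ ∫ v in s, -(φ v * fD v) := integral_nonneg_of_ae hnonneg
  have hne : ∫ v in s, -(φ v * fD v) ≠ 0 := by
    intro h
    have hz := (integral_eq_zero_iff_of_nonneg_ae hnonneg hint').mp h
    have hfD0 : fD =ᵐ[volume.restrict s] 0 := by
      filter_upwards [hz, ae_restrict_mem hs] with v hv hvs
      have hmul : φ v * fD v = 0 := by
        have : -(φ v * fD v) = 0 := hv
        linarith
      rcases mul_eq_zero.mp hmul with h1 | h2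
      · exact absurd h1 (ne_of_lt (hφ v hvs))
      · exact h2
    have : ∫ v in s, fD v = 0 := by
      rw [integral_congr_ae hfD0]; simp
    linarith
  have hlt : 0 < ∫ v in s, -(φ v * fD v) := lt_of_le_of_ne h0 (Ne.symm hne)
  rw [integral_neg] at hlt
  linarith

theorem stmt12 (Ω : Set ℝ) (hΩ : Ω.OrdConnected)
    (fD : ℝ → ℝ) (hfD0 : ∀ v, 0 ≤ fD v) (hfD1 : ∫ v in Ω, fD v = 1)
    (ℓ : ℝ → ℝ → ℝ) (hℓ0 : ∀ x, ℓ x x = 0)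
    (hℓmono : ∀ v x₁ x₂, x₁ < x₂ → ℓ x₁ v < ℓ x₂ v)
    (IR : ℝ → ℝ) (hIR : ∀ x, IR x = ∫ v in Ω ∩ Set.Ici x, ℓ x v * fD v)
    (hint : ∀ x, IntegrableOn (fun v => ℓ x v * fD v) (Ω ∩ Set.Ici x)) :
    MonotoneOn IR Ω ∧
    ∀ x₁ ∈ Ω, ∀ x₂ ∈ Ω, x₁ < x₂ →
      (0 < ∫ v in Ω ∩ Set.Ioo x₁ x₂, fD v) ∨ (0 < ∫ v in Ω ∩ Set.Ici x₂, fD v) →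
      IR x₁ < IR x₂ := by
  have hΩm : MeasurableSet Ω := hΩ.measurableSet
  -- general facts for x₁ < x₂
  have key : ∀ x₁ x₂ : ℝ, x₁ < x₂ →
      IR x₁ = (∫ v in Ω ∩ Set.Ioo x₁ x₂, ℓ x₁ v * fD v) +
        ∫ v in Ω ∩ Set.Ici x₂, ℓ x₁ v * fD v := by
    intro x₁ x₂ h12
    have hae : (Ω ∩ Set.Ici x₁ : Set ℝ) =ᵐ[volume] (Ω ∩ Set.Ioi x₁ : Set ℝ) := by
      rw [MeasureTheory.ae_eq_set]
      constructor
      · apply measure_mono_null (t := {x₁}) _ (by simp)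
        rintro v ⟨⟨hvΩ, hvi⟩, hvn⟩
        rcases eq_or_lt_of_le (Set.mem_Ici.mp hvi) with h | h
        · simp [h.symm]
        · exact absurd ⟨hvΩ, h⟩ hvn
      · apply measure_mono_null (t := (∅ : Set ℝ)) _ (by simp)
        rintro v ⟨⟨hvΩ, hvi⟩, hvn⟩
        exact absurd ⟨hvΩ, Set.mem_Ici.mpr (le_of_lt (Set.mem_Ioi.mp hvi))⟩ hvn
    have hunion : (Ω ∩ Set.Ioi x₁ : Set ℝ) =
        (Ω ∩ Set.Ioo x₁ x₂) ∪ (Ω ∩ Set.Ici x₂) := by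
      rw [← Set.inter_union_distrib_left, Set.Ioo_union_Ici_eq_Ioi h12]
    have hdisj : Disjoint (Ω ∩ Set.Ioo x₁ x₂) (Ω ∩ Set.Ici x₂) := by
      apply Set.disjoint_left.mpr
      rintro v ⟨_, _, hlt⟩ ⟨_, hge⟩
      exact absurd hge (not_le.mpr hlt)
    have hint1 : IntegrableOn (fun v => ℓ x₁ v * fD v) (Ω ∩ Set.Ioo x₁ x₂) :=
      (hint x₁).mono_set (Set.inter_subset_inter_right _ ((Set.Ioo_subset_Icc_self.trans Set.Icc_subset_Ici_self)))
    have hint2 : IntegrableOn (fun v => ℓ x₁ v * fD v) (Ω ∩ Set.Ici x₂) :=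
      (hint x₁).mono_set (Set.inter_subset_inter_right _ (Set.Ici_subset_Ici.mpr (le_of_lt h12)))
    rw [hIR, setIntegral_congr_set hae, hunion,
      setIntegral_union hdisj (hΩm.inter measurableSet_Ici) hint1 hint2]
  constructor
  · -- MonotoneOn
    intro x₁ _ x₂ _ hle
    rcases eq_or_lt_of_le hle with rfl | h12
    · exact le_refl _
    have hA : (∫ v in Ω ∩ Set.Ioo x₁ x₂, ℓ x₁ v * fD v) ≤ 0 := by
      apply setIntegral_nonpos (hΩm.inter measurableSet_Ioo)
      rintro v ⟨_, hv1, _⟩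
      have : ℓ x₁ v < ℓ v v := hℓmono v x₁ v hv1
      rw [hℓ0 v] at this
      exact mul_nonpos_of_nonpos_of_nonneg (le_of_lt this) (hfD0 v)
    have hB : (∫ v in Ω ∩ Set.Ici x₂, ℓ x₁ v * fD v) ≤
        ∫ v in Ω ∩ Set.Ici x₂, ℓ x₂ v * fD v := by
      apply setIntegral_mono_on
        ((hint x₁).mono_set (Set.inter_subset_inter_right _
          (Set.Ici_subset_Ici.mpr (le_of_lt h12))))
        (hint x₂) (hΩm.inter measurableSet_Ici)
      intro v _
      exact mul_le_mul_of_nonneg_right (le_of_lt (hℓmono v x₁ x₂ h12)) (hfD0 v)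
    rw [key x₁ x₂ h12, hIR x₂]
    linarith
  · -- strict
    intro x₁ _ x₂ _ h12 hcase
    have hA : (∫ v in Ω ∩ Set.Ioo x₁ x₂, ℓ x₁ v * fD v) ≤ 0 := by
      apply setIntegral_nonpos (hΩm.inter measurableSet_Ioo)
      rintro v ⟨_, hv1, _⟩
      have : ℓ x₁ v < ℓ v v := hℓmono v x₁ v hv1
      rw [hℓ0 v] at this
      exact mul_nonpos_of_nonpos_of_nonneg (le_of_lt this) (hfD0 v)
    have hint2 : IntegrableOn (fun v => ℓ x₁ v * fD v) (Ω ∩ Set.Ici x₂) :=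
      (hint x₁).mono_set (Set.inter_subset_inter_right _
        (Set.Ici_subset_Ici.mpr (le_of_lt h12)))
    have hB : (∫ v in Ω ∩ Set.Ici x₂, ℓ x₁ v * fD v) ≤
        ∫ v in Ω ∩ Set.Ici x₂, ℓ x₂ v * fD v := by
      apply setIntegral_mono_on hint2 (hint x₂) (hΩm.inter measurableSet_Ici)
      intro v _
      exact mul_le_mul_of_nonneg_right (le_of_lt (hℓmono v x₁ x₂ h12)) (hfD0 v)
    rw [key x₁ x₂ h12, hIR x₂]
    rcases hcase with hpos | hpos
    · -- strict on A
      have hAlt : (∫ v in Ω ∩ Set.Ioo x₁ x₂, ℓ x₁ v * fD v) < 0 := by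
        apply neg_int_aux _ (hΩm.inter measurableSet_Ioo) _ _ _ hfD0 _ hpos
        · rintro v ⟨_, hv1, _⟩
          have : ℓ x₁ v < ℓ v v := hℓmono v x₁ v hv1
          rwa [hℓ0 v] at this
        · exact (hint x₁).mono_set (Set.inter_subset_inter_right _ (Set.Ioo_subset_Icc_self.trans Set.Icc_subset_Ici_self))
      linarith
    · -- strict on B
      have hBlt : (∫ v in Ω ∩ Set.Ici x₂, ℓ x₁ v * fD v) <
          ∫ v in Ω ∩ Set.Ici x₂, ℓ x₂ v * fD v := by
        have hdiff : (∫ v in Ω ∩ Set.Ici x₂, (ℓ x₁ v - ℓ x₂ v) * fD v) < 0 := by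
          apply neg_int_aux _ (hΩm.inter measurableSet_Ici) _ _ _ hfD0 _ hpos
          · intro v _
            have := hℓmono v x₁ x₂ h12
            linarith
          · have := hint2.sub (hint x₂)
            simpa [sub_mul, Pi.sub_def] using this
        have heq : (∫ v in Ω ∩ Set.Ici x₂, (ℓ x₁ v - ℓ x₂ v) * fD v) =
            (∫ v in Ω ∩ Set.Ici x₂, ℓ x₁ v * fD v) -
            ∫ v in Ω ∩ Set.Ici x₂, ℓ x₂ v * fD v := by
          rw [← integral_sub hint2 (hint x₂)]
          congr 1
          ext v
          ring
        linarith [heq ▸ hdiff]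
      linarith
end

section
/- Let v ∈ ℝ, γ > 0, α ≥ 1, and consider the density f(x) = K·e^{−(x−v)²/γ} for x ≤ v and f(x) = K·e^{−α(x−v)²/γ} for x > v, where K is the normalizing constant making ∫_ℝ f = 1. Then K = 2√α / (√(πγ)·(1+√α)), and the mean of f equals v − √(γ/π)·(√α − 1)/√α. -/
open Real MeasureTheory Set Filter Topology

/-- half-line first moment of the Gaussian -/
lemma aux_mom_Ioi {b : ℝ} (hb : 0 < b) :
    ∫ x in Ioi (0:ℝ), x * Real.exp (-b * x ^ 2) = 1 / (2 * b) := by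
  have hderiv : ∀ x ∈ Ici (0:ℝ),
      HasDerivAt (fun x : ℝ => -Real.exp (-b * x ^ 2) / (2 * b))
        (x * Real.exp (-b * x ^ 2)) x := by
    intro x _
    have h1 : HasDerivAt (fun x : ℝ => -b * x ^ 2) (-b * (2 * x)) x := by
      simpa using ((hasDerivAt_pow 2 x).const_mul (-b))
    have h3 : HasDerivAt (fun x : ℝ => -Real.exp (-b * x ^ 2) / (2 * b))
        (-(Real.exp (-b * x ^ 2) * (-b * (2 * x))) / (2 * b)) x := (h1.exp.neg.div_const (2 * b))
    convert h3 using 1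
    field_simp
  have hint : IntegrableOn (fun x : ℝ => x * Real.exp (-b * x ^ 2)) (Ioi 0) :=
    (integrable_mul_exp_neg_mul_sq hb).integrableOn
  have h2 : Tendsto (fun x : ℝ => -b * x ^ 2) atTop atBot :=
    (tendsto_pow_atTop two_ne_zero).const_mul_atTop_of_neg (by linarith)
  have htend : Tendsto (fun x : ℝ => -Real.exp (-b * x ^ 2) / (2 * b)) atTop (𝓝 0) := by
    have := ((Real.tendsto_exp_atBot.comp h2).neg.div_const (2 * b))
    simpa using this
  have := integral_Ioi_of_hasDerivAt_of_tendsto' hderiv hint htend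
  rw [this]
  rw [neg_div, sub_neg_eq_add, zero_add]
  norm_num

lemma aux_gauss_Iic {b : ℝ} (hb : 0 < b) :
    ∫ t in Iic (0:ℝ), Real.exp (-b * t ^ 2) = Real.sqrt (π / b) / 2 := by
  have h := integral_comp_neg_Iic (0:ℝ) (fun t => Real.exp (-b * t ^ 2))
  simp only [neg_zero, neg_sq] at h
  exact h.trans (integral_gaussian_Ioi b)

lemma aux_mom_Iic {b : ℝ} (hb : 0 < b) :
    ∫ t in Iic (0:ℝ), t * Real.exp (-b * t ^ 2) = -(1 / (2 * b)) := by
  have h := integral_comp_neg_Iic (0:ℝ) (fun t => t * Real.exp (-b * t ^ 2))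
  simp only [neg_zero, neg_sq, neg_mul, integral_neg] at h
  simp only [← neg_mul] at h
  rw [aux_mom_Ioi hb] at h
  linarith

lemma aux_shift_Iic (c : ℝ) (h : ℝ → ℝ) :
    (∫ x in Iic c, h (x - c)) = ∫ t in Iic (0:ℝ), h t := by
  have A : MeasurableEmbedding (fun x : ℝ => x + c) :=
    (Homeomorph.addRight c).isClosedEmbedding.measurableEmbedding
  have hm := A.setIntegral_map (μ := volume) (fun y => h (y - c)) (Iic c)
  rw [map_add_right_eq_self volume c] at hm
  rw [hm]
  have hp : (fun x : ℝ => x + c) ⁻¹' (Iic c) = Iic 0 := by ext x; simp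
  rw [hp]
  simp

lemma aux_shift_Ioi (c : ℝ) (h : ℝ → ℝ) :
    (∫ x in Ioi c, h (x - c)) = ∫ t in Ioi (0:ℝ), h t := by
  have A : MeasurableEmbedding (fun x : ℝ => x + c) :=
    (Homeomorph.addRight c).isClosedEmbedding.measurableEmbedding
  have hm := A.setIntegral_map (μ := volume) (fun y => h (y - c)) (Ioi c)
  rw [map_add_right_eq_self volume c] at hm
  rw [hm]
  have hp : (fun x : ℝ => x + c) ⁻¹' (Ioi c) = Ioi 0 := by ext x; simp
  rw [hp]
  simp

theorem stmt13 (v γ α : ℝ) (hγ : 0 < γ) (hα : 1 ≤ α)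
    (K : ℝ) (f : ℝ → ℝ)
    (hf : ∀ x, f x = if x ≤ v then K * Real.exp (-(x - v) ^ 2 / γ)
                     else K * Real.exp (-α * (x - v) ^ 2 / γ))
    (hK : ∫ x, f x = 1) :
    K = 2 * Real.sqrt α / (Real.sqrt (π * γ) * (1 + Real.sqrt α)) ∧
    (∫ x, x * f x) = v - Real.sqrt (γ / π) * (Real.sqrt α - 1) / Real.sqrt α := by
  have hα0 : (0:ℝ) < α := lt_of_lt_of_le one_pos hα
  have hb1 : (0:ℝ) < 1 / γ := by positivity
  have hb2 : (0:ℝ) < α / γ := by positivity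
  set S := Real.sqrt (π * γ) with hS_def
  set sa := Real.sqrt α with hsa_def
  have hS : 0 < S := Real.sqrt_pos.mpr (by positivity)
  have hsa : 0 < sa := Real.sqrt_pos.mpr hα0
  have hsa2 : sa ^ 2 = α := Real.sq_sqrt hα0.le
  -- rewrite exponents
  have hexp1 : ∀ x : ℝ, -(x - v) ^ 2 / γ = -(1 / γ) * (x - v) ^ 2 := by
    intro x; field_simp
  have hexp2 : ∀ x : ℝ, -α * (x - v) ^ 2 / γ = -(α / γ) * (x - v) ^ 2 := by
    intro x; field_simp
  set E1 : ℝ → ℝ := fun x => Real.exp (-(1 / γ) * (x - v) ^ 2) with hE1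
  set E2 : ℝ → ℝ := fun x => Real.exp (-(α / γ) * (x - v) ^ 2) with hE2
  -- integrability
  have hI1 : Integrable E1 := (integrable_exp_neg_mul_sq hb1).comp_sub_right v
  have hI2 : Integrable E2 := (integrable_exp_neg_mul_sq hb2).comp_sub_right v
  have hM1 : Integrable (fun x => (x - v) * E1 x) :=
    (integrable_mul_exp_neg_mul_sq hb1).comp_sub_right v
  have hM2 : Integrable (fun x => (x - v) * E2 x) :=
    (integrable_mul_exp_neg_mul_sq hb2).comp_sub_right v
  -- f on each piece
  have hfIic_eq : EqOn (fun x => K * E1 x) f (Iic v) := by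
    intro x hx
    simp only [hf x, if_pos (mem_Iic.mp hx), hE1, hexp1 x]
  have hfIoi_eq : EqOn (fun x => K * E2 x) f (Ioi v) := by
    intro x hx
    simp only [hf x, if_neg (not_le.mpr (mem_Ioi.mp hx)), hE2, hexp2 x]
  have hfIic : IntegrableOn f (Iic v) :=
    ((hI1.const_mul K).integrableOn).congr_fun hfIic_eq measurableSet_Iic
  have hfIoi : IntegrableOn f (Ioi v) :=
    ((hI2.const_mul K).integrableOn).congr_fun hfIoi_eq measurableSet_Ioi
  -- basic Gaussian values
  have hval1 : ∫ x in Iic v, E1 x = S / 2 := by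
    have := aux_shift_Iic v (fun t => Real.exp (-(1 / γ) * t ^ 2))
    rw [hE1, this, aux_gauss_Iic hb1]
    have : π / (1 / γ) = π * γ := by field_simp
    rw [this]
  have hval2 : ∫ x in Ioi v, E2 x = S / sa / 2 := by
    have h0 := aux_shift_Ioi v (fun t => Real.exp (-(α / γ) * t ^ 2))
    rw [hE2, h0, integral_gaussian_Ioi]
    have h1 : π / (α / γ) = (π * γ) / α := by field_simp
    rw [h1, Real.sqrt_div (by positivity : (0:ℝ) ≤ π * γ)]
  have hmval1 : ∫ x in Iic v, (x - v) * E1 x = -(γ / 2) := by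
    have := aux_shift_Iic v (fun t => t * Real.exp (-(1 / γ) * t ^ 2))
    rw [hE1, this, aux_mom_Iic hb1]
    field_simp
  have hmval2 : ∫ x in Ioi v, (x - v) * E2 x = γ / (2 * α) := by
    have := aux_shift_Ioi v (fun t => t * Real.exp (-(α / γ) * t ^ 2))
    rw [hE2, this, aux_mom_Ioi hb2]
    field_simp
  -- total mass equation
  have htot : K * (S / 2) + K * (S / sa / 2) = 1 := by
    rw [← hK, ← intervalIntegral.integral_Iic_add_Ioi hfIic hfIoi]
    congr 1
    · rw [← setIntegral_congr_fun measurableSet_Iic hfIic_eq, integral_const_mul, hval1]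
    · rw [← setIntegral_congr_fun measurableSet_Ioi hfIoi_eq, integral_const_mul, hval2]
  have hKval : K = 2 * sa / (S * (1 + sa)) := by
    rw [eq_div_iff (by positivity)]
    field_simp at htot
    nlinarith [htot]
  refine ⟨hKval, ?_⟩
  -- mean computation
  have hxf1 : (fun x => x * (K * E1 x)) =
      fun x => K * ((x - v) * E1 x) + (K * v) * E1 x := by
    funext x; ring
  have hxf2 : (fun x => x * (K * E2 x)) =
      fun x => K * ((x - v) * E2 x) + (K * v) * E2 x := by
    funext x; ring
  have hxI1 : Integrable (fun x => x * (K * E1 x)) := by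
    rw [hxf1]; exact (hM1.const_mul K).add (hI1.const_mul (K * v))
  have hxI2 : Integrable (fun x => x * (K * E2 x)) := by
    rw [hxf2]; exact (hM2.const_mul K).add (hI2.const_mul (K * v))
  have hxfIic_eq : EqOn (fun x => x * (K * E1 x)) (fun x => x * f x) (Iic v) := by
    intro x hx; simp only [hfIic_eq hx]
  have hxfIoi_eq : EqOn (fun x => x * (K * E2 x)) (fun x => x * f x) (Ioi v) := by
    intro x hx; simp only [hfIoi_eq hx]
  have hxfIic : IntegrableOn (fun x => x * f x) (Iic v) :=
    (hxI1.integrableOn).congr_fun hxfIic_eq measurableSet_Iic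
  have hxfIoi : IntegrableOn (fun x => x * f x) (Ioi v) :=
    (hxI2.integrableOn).congr_fun hxfIoi_eq measurableSet_Ioi
  have hmean1 : ∫ x in Iic v, x * f x = K * (-(γ / 2)) + (K * v) * (S / 2) := by
    rw [← setIntegral_congr_fun measurableSet_Iic hxfIic_eq]
    rw [show (fun x => x * (K * E1 x)) = fun x => K * ((x - v) * E1 x) + (K * v) * E1 x from hxf1]
    rw [integral_add ((hM1.const_mul K).integrableOn) ((hI1.const_mul (K * v)).integrableOn),
      integral_const_mul, integral_const_mul, hmval1, hval1]
  have hmean2 : ∫ x in Ioi v, x * f x = K * (γ / (2 * α)) + (K * v) * (S / sa / 2) := by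
    rw [← setIntegral_congr_fun measurableSet_Ioi hxfIoi_eq]
    rw [show (fun x => x * (K * E2 x)) = fun x => K * ((x - v) * E2 x) + (K * v) * E2 x from hxf2]
    rw [integral_add ((hM2.const_mul K).integrableOn) ((hI2.const_mul (K * v)).integrableOn),
      integral_const_mul, integral_const_mul, hmval2, hval2]
  have hmean : ∫ x, x * f x
      = K * (-(γ / 2)) + K * (γ / (2 * α)) + v * (K * (S / 2) + K * (S / sa / 2)) := by
    rw [← intervalIntegral.integral_Iic_add_Ioi hxfIic hxfIoi, hmean1, hmean2]
    ring
  rw [hmean, htot, hKval]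
  -- final algebra
  have hγs : Real.sqrt γ ^ 2 = γ := Real.sq_sqrt hγ.le
  have hπs : Real.sqrt π ^ 2 = π := Real.sq_sqrt Real.pi_pos.le
  have hSsplit : S = Real.sqrt π * Real.sqrt γ := by
    rw [hS_def, Real.sqrt_mul Real.pi_pos.le]
  have hγπ : Real.sqrt (γ / π) = Real.sqrt γ / Real.sqrt π :=
    Real.sqrt_div hγ.le π
  rw [hγπ, hSsplit]
  set g := Real.sqrt γ with hg_def
  set p := Real.sqrt π with hp_def
  have hg : 0 < g := Real.sqrt_pos.mpr hγ
  have hp : 0 < p := Real.sqrt_pos.mpr Real.pi_pos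
  rw [← hsa2, ← hγs]
  field_simp
  ring
end
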